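/- Let A be an associative F-algebra containing a non-zero finite-dimensional semisimple subalgebra S. Suppose that A is generated by S as a two-sided ideal (i.e. the smallest two-sided ideal of A containing S equals A), and that S is 1-perfect if p ≠ 2, or 4-perfect if p = 2. Then A = A^(1)A^(1) + A^(1), where A^(1)A^(1) denotes the linear span of all products xy with x, y ∈ A^(1). -/

import Mathlib

/-!
Statement 1: if the associative `F`-algebra `A` contains a non-zero finite-dimensional
semisimple subalgebra `S`, `A` is generated by `S` as a two-sided ideal, and `S` is
1-perfect when `char F ≠ 2` (resp. 4-perfect when `char F = 2`), then the derived
subalgebra `A⁽¹⁾` (the span of all commutators) is a perfect Lie algebra.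
-/

universe u v

/-- An `F`-algebra (possibly non-unital) is `k`-perfect if it has no proper two-sided
ideal of codimension at most `k`. -/
def kPerfect (F : Type u) (A : Type v) [Field F] [NonUnitalRing A] [Module F A]
    (k : ℕ) : Prop :=
  ∀ J : Submodule F A, (∀ a : A, ∀ x ∈ J, a * x ∈ J ∧ x * a ∈ J) → J ≠ ⊤ →
    ¬ (Module.rank F (A ⧸ J) ≤ (k : Cardinal))

/-- A non-unital `F`-algebra is (finite-dimensional) semisimple iff it is isomorphic,
as a non-unital `F`-algebra, to a finite direct sum of full matrix algebras over `F`. -/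
def IsMatrixSemisimple (F : Type u) (S : Type v) [Field F] [NonUnitalRing S]
    [Module F S] : Prop :=
  ∃ (m : ℕ) (n : Fin m → ℕ) (_hn : ∀ i, 0 < n i)
    (f : S →ₙₐ[F] ∀ i, Matrix (Fin (n i)) (Fin (n i)) F), Function.Bijective f

/-- The derived subalgebra `A⁽¹⁾`: the `F`-linear span of all commutators. -/
def derivedSub (F : Type u) (A : Type v) [Field F] [NonUnitalRing A] [Module F A] :
    Submodule F A :=
  Submodule.span F {z : A | ∃ x y : A, z = x * y - y * x}

section Aux

variable (F : Type u) (A : Type v) [Field F] [NonUnitalRing A] [Module F A]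

/-- The target submodule `A⁽¹⁾A⁽¹⁾ + A⁽¹⁾`. -/
def Tgt : Submodule F A :=
  Submodule.span F {z : A | ∃ x ∈ derivedSub F A, ∃ y ∈ derivedSub F A, z = x * y}
    ⊔ derivedSub F A

variable {F A}

lemma comm_mem (x y : A) : x * y - y * x ∈ derivedSub F A :=
  Submodule.subset_span ⟨x, y, rfl⟩

lemma comm_mem_Tgt (x y : A) : x * y - y * x ∈ Tgt F A :=
  Submodule.mem_sup_right (comm_mem x y)

lemma prod_mem_Tgt {x y : A} (hx : x ∈ derivedSub F A) (hy : y ∈ derivedSub F A) :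
    x * y ∈ Tgt F A :=
  Submodule.mem_sup_left (Submodule.subset_span ⟨x, hx, y, hy, rfl⟩)

/-- Sandwich lemma: if `f,g,p,q` behave like matrix units `e_ii, e_jj, e_ij, e_ji`,
then `f * c * f ∈ Tgt`. -/
lemma sandwich_mem {f g p q : A} (hpq : p * q = f) (hpg : p * g = p) (hgf : g * f = 0)
    (hgq : g * q = q) (hqg : q * g = 0) (c : A) : f * c * f ∈ Tgt F A := by
  have hX : f * c * p ∈ derivedSub F A := by
    have h := comm_mem (F := F) (f * c * p) g
    have h1 : f * c * p * g = f * c * p := by rw [mul_assoc (f * c), hpg]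
    have h2 : g * (f * c * p) = 0 := by
      rw [← mul_assoc, ← mul_assoc, hgf, zero_mul, zero_mul]
    rwa [h1, h2, sub_zero] at h
  have hq : q ∈ derivedSub F A := by
    have h := comm_mem (F := F) g q
    rwa [hgq, hqg, sub_zero] at h
  have : f * c * p * q = f * c * f := by rw [mul_assoc (f * c), hpq]
  rw [← this]
  exact prod_mem_Tgt hX hq

lemma left_mem {f g p q : A} (hff : f * f = f) (hpq : p * q = f) (hpg : p * g = p)
    (hgf : g * f = 0) (hgq : g * q = q) (hqg : q * g = 0) (a : A) : f * a ∈ Tgt F A := by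
  have key : f * a = (f * (f * a) - (f * a) * f) + f * a * f := by
    rw [← mul_assoc, hff]; abel
  rw [key]
  exact add_mem (comm_mem_Tgt f (f * a)) (sandwich_mem hpq hpg hgf hgq hqg a)

lemma right_mem {f g p q : A} (hff : f * f = f) (hpq : p * q = f) (hpg : p * g = p)
    (hgf : g * f = 0) (hgq : g * q = q) (hqg : q * g = 0) (a : A) : a * f ∈ Tgt F A := by
  have key : a * f = ((a * f) * f - f * (a * f)) + f * (a * f) := by
    rw [mul_assoc, hff]; abel
  rw [key]
  refine add_mem (comm_mem_Tgt (a * f) f) ?_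
  rw [← mul_assoc]
  exact sandwich_mem hpq hpg hgf hgq hqg a

lemma mid_mem {f g p q : A}
    (hgg : g * g = g) (hfg : f * g = 0)
    (hpq : p * q = f) (hqp : q * p = g)
    (hfp : f * p = p) (hpf : p * f = 0) (hpg : p * g = p)
    (hgq : g * q = q) (hqf : q * f = q)
    (a b : A) : a * f * b ∈ Tgt F A := by
  -- sandwich for g uses (g, f, q, p): q*p = g, q*f = q, f*g = 0, f*p = p, p*f = 0
  have sg : ∀ c : A, g * c * g ∈ Tgt F A := fun c =>
    sandwich_mem hqp hqf hfg hfp hpf c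
  have lg : ∀ c : A, g * c ∈ Tgt F A := fun c =>
    left_mem hgg hqp hqf hfg hfp hpf c
  have rg : ∀ c : A, c * g ∈ Tgt F A := fun c =>
    right_mem hgg hqp hqf hfg hfp hpf c
  have hX : a * p - g * (a * p) ∈ derivedSub F A := by
    have h := comm_mem (F := F) (a * p) g
    rwa [mul_assoc, hpg] at h
  have hY : q * b - (q * b) * g ∈ derivedSub F A := by
    have h := comm_mem (F := F) g (q * b)
    rwa [← mul_assoc, hgq] at h
  have hXY : (a * p - g * (a * p)) * (q * b - (q * b) * g) ∈ Tgt F A := prod_mem_Tgt hX hY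
  have hprod : ∀ u v : A, (u * p) * ((q * v)) = u * f * v := by
    intro u v
    rw [mul_assoc u p, ← mul_assoc p q, hpq, ← mul_assoc]
  have expand : (a * p - g * (a * p)) * (q * b - (q * b) * g)
      = a * f * b - (a * f * b) * g - g * (a * f * b) + (g * (a * f * b)) * g := by
    have t1 : (a * p) * (q * b) = a * f * b := hprod a b
    have t2 : (a * p) * ((q * b) * g) = (a * f * b) * g := by
      rw [mul_assoc q b g, hprod a (b * g), mul_assoc (a*f) b g]
    have t3 : (g * (a * p)) * (q * b) = g * (a * f * b) := by
      rw [← mul_assoc g a p, hprod (g * a) b]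
      rw [← mul_assoc, ← mul_assoc]
    have t4 : (g * (a * p)) * ((q * b) * g) = (g * (a * f * b)) * g := by
      rw [mul_assoc q b g, ← mul_assoc g a p, hprod (g * a) (b * g)]
      rw [← mul_assoc, ← mul_assoc, mul_assoc (g*a*f) b g, ← mul_assoc, ← mul_assoc]
    rw [mul_sub, sub_mul, sub_mul, t1, t2, t3, t4]; abel
  have key : a * f * b = (a * p - g * (a * p)) * (q * b - (q * b) * g)
      + ((a * f * b) * g + g * (a * f * b) - (g * (a * f * b)) * g) := by
    rw [expand]; abel
  rw [key]
  exact add_mem hXY (sub_mem (add_mem (rg _) (lg _)) (sg _))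

end Aux

theorem eq_derived_sq_sup_derived
    (F : Type u) [Field F] [IsAlgClosed F]
    (A : Type v) [NonUnitalRing A] [Module F A] [SMulCommClass F A A] [IsScalarTower F A A]
    (S : NonUnitalSubalgebra F A)
    (hS_ne : S ≠ ⊥)
    (hS_ss : IsMatrixSemisimple F S)
    -- `A` is generated by `S` as a two-sided ideal:
    (hgen : ∀ J : Submodule F A, (∀ a : A, ∀ x ∈ J, a * x ∈ J ∧ x * a ∈ J) →
      (S : Set A) ⊆ J → J = ⊤)
    -- `S` is 1-perfect with `p ≠ 2`, or 4-perfect with `p = 2`: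
    (hperf : (ringChar F ≠ 2 ∧ kPerfect F S 1) ∨ (ringChar F = 2 ∧ kPerfect F S 4)) :
    Submodule.span F
        {z : A | ∃ x ∈ derivedSub F A, ∃ y ∈ derivedSub F A, z = x * y}
      ⊔ derivedSub F A = (⊤ : Submodule F A) := by
  obtain ⟨m, n, hn, f, hf⟩ := hS_ss
  have hkp : kPerfect F S 1 ∨ kPerfect F S 4 := hperf.imp And.right And.right
  -- every block has size at least 2
  have two_le : ∀ b : Fin m, 2 ≤ n b := by
    intro b
    by_contra hlt
    have h0 : (0 : ℕ) < n b := hn b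
    have hnb : n b = 1 := by omega
    let φ : S →ₗ[F] Matrix (Fin (n b)) (Fin (n b)) F :=
      { toFun := fun s => f s b
        map_add' := fun x y => by show f (x + y) b = f x b + f y b; rw [map_add]; rfl
        map_smul' := fun r x => by show f (r • x) b = r • f x b; rw [map_smul]; rfl }
    have hφsurj : Function.Surjective φ := by
      intro M
      obtain ⟨s, hs⟩ := hf.2 (Pi.single b M)
      exact ⟨s, by simp [φ, hs]⟩
    have hJideal : ∀ a : S, ∀ x ∈ LinearMap.ker φ, a * x ∈ LinearMap.ker φ ∧
        x * a ∈ LinearMap.ker φ := by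
      intro a x hx
      have hx0 : f x b = 0 := hx
      constructor
      · show f (a * x) b = 0
        rw [map_mul]
        show f a b * f x b = 0
        rw [hx0, mul_zero]
      · show f (x * a) b = 0
        rw [map_mul]
        show f x b * f a b = 0
        rw [hx0, zero_mul]
    have hJne : LinearMap.ker φ ≠ ⊤ := by
      intro hJ
      obtain ⟨s, hs⟩ := hφsurj 1
      have hmem : s ∈ LinearMap.ker φ := hJ ▸ Submodule.mem_top
      have h1 : (1 : Matrix (Fin (n b)) (Fin (n b)) F) = 0 := by
        rw [← hs]; exact hmem
      have := congrFun (congrFun h1 ⟨0, h0⟩) ⟨0, h0⟩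
      simp [Matrix.one_apply] at this
    have hrank : Module.rank F (S ⧸ LinearMap.ker φ) ≤ 1 := by
      have e := φ.quotKerEquivOfSurjective hφsurj
      have h1 : Module.rank F (Matrix (Fin (n b)) (Fin (n b)) F) = 1 := by
        have h2 : Module.finrank F (Matrix (Fin (n b)) (Fin (n b)) F) = 1 := by
          rw [Module.finrank_matrix]
          simp [hnb]
        rw [← Module.finrank_eq_rank, h2, Nat.cast_one]
      have h3 := e.lift_rank_eq
      rw [h1, Cardinal.lift_one] at h3
      have h4 : Cardinal.lift.{u} (Module.rank F (↥S ⧸ LinearMap.ker φ)) ≤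
          Cardinal.lift.{u} 1 := by rw [Cardinal.lift_one]; exact le_of_eq h3
      exact_mod_cast Cardinal.lift_le.mp h4
    rcases hkp with hk | hk
    · exact hk (LinearMap.ker φ) hJideal hJne (le_trans hrank (by norm_num))
    · exact hk (LinearMap.ker φ) hJideal hJne (le_trans hrank (by norm_num))
  -- matrix units in S
  let e : S ≃ (∀ i, Matrix (Fin (n i)) (Fin (n i)) F) := Equiv.ofBijective f hf
  let E : (b : Fin m) → Fin (n b) → Fin (n b) → S := fun b i j =>
    e.symm (Pi.single b (Matrix.single i j 1))
  have hfE : ∀ b i j, f (E b i j) = Pi.single b (Matrix.single i j 1) := fun b i j =>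
    e.apply_symm_apply _
  have hEmul : ∀ b (i j k : Fin (n b)), E b i j * E b j k = E b i k := by
    intro b i j k
    apply hf.1
    rw [map_mul, hfE, hfE, hfE, ← Pi.single_mul,
      Matrix.single_mul_single_same (c := (1:F)) i j k 1, one_mul]
  have hEzero : ∀ b (i j k l : Fin (n b)), j ≠ k → E b i j * E b k l = 0 := by
    intro b i j k l hjk
    apply hf.1
    rw [map_mul, hfE, hfE, map_zero, ← Pi.single_mul,
      Matrix.single_mul_single_of_ne (c := (1:F)) i j k hjk 1, Pi.single_zero]
  -- matrix units in A
  set N : (b : Fin m) → Fin (n b) → Fin (n b) → A := fun b i j => ((E b i j : S) : A) with hN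
  have hNmul : ∀ b (i j k : Fin (n b)), N b i j * N b j k = N b i k := fun b i j k =>
    congrArg Subtype.val (hEmul b i j k)
  have hNzero : ∀ b (i j k l : Fin (n b)), j ≠ k → N b i j * N b k l = 0 :=
    fun b i j k l h => congrArg Subtype.val (hEzero b i j k l h)
  -- the partner index
  have hpos : ∀ b : Fin m, 0 < n b := hn
  let pr : (b : Fin m) → Fin (n b) → Fin (n b) := fun b i =>
    if i.val = 0 then ⟨1, two_le b⟩ else ⟨0, hpos b⟩
  have hpr : ∀ b i, (pr b i) ≠ i := by
    intro b i
    by_cases h : i.val = 0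
    · simp only [pr, h, if_true]
      intro hcontra
      have := congrArg Fin.val hcontra
      simp [h] at this
    · simp only [pr, h, if_false]
      intro hcontra
      have := congrArg Fin.val hcontra
      simp at this
      exact h this.symm
  -- the three membership lemmas for the diagonal units
  have hNl : ∀ b i (a : A), N b i i * a ∈ Tgt F A := by
    intro b i a
    set j := pr b i with hj
    have hij : i ≠ j := (hpr b i).symm
    exact left_mem (hNmul b i i i) (hNmul b i j i) (hNmul b i j j)
      (hNzero b j j i i (Ne.symm hij)) (hNmul b j j i) (hNzero b j i j j hij) a
  have hNr : ∀ b i (a : A), a * N b i i ∈ Tgt F A := by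
    intro b i a
    set j := pr b i with hj
    have hij : i ≠ j := (hpr b i).symm
    exact right_mem (hNmul b i i i) (hNmul b i j i) (hNmul b i j j)
      (hNzero b j j i i (Ne.symm hij)) (hNmul b j j i) (hNzero b j i j j hij) a
  have hNm : ∀ b i (a c : A), a * N b i i * c ∈ Tgt F A := by
    intro b i a c
    set j := pr b i with hj
    have hij : i ≠ j := (hpr b i).symm
    exact mid_mem (hNmul b j j j) (hNzero b i i j j hij) (hNmul b i j i)
      (hNmul b j i j) (hNmul b i i j) (hNzero b i j i i (Ne.symm hij))
      (hNmul b i j j) (hNmul b j j i) (hNmul b j i i) a c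
  -- the identity of S
  have hdiag : ∀ b : Fin m, ∑ i : Fin (n b), Matrix.single i i (1:F) = 1 := by
    intro b
    ext a c
    simp [Matrix.sum_apply, Matrix.single, Matrix.one_apply, ite_and,
      Finset.sum_ite_eq]
  set eS : S := ∑ b, ∑ i, E b i i with heS
  have hfeS : f eS = 1 := by
    rw [heS, map_sum]
    have hblock : ∀ b : Fin m, f (∑ i, E b i i) =
        Pi.single b (1 : Matrix (Fin (n b)) (Fin (n b)) F) := by
      intro b
      rw [map_sum]
      simp_rw [hfE]
      funext c
      rw [Finset.sum_apply]
      rcases eq_or_ne c b with rfl | hc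
      · simp only [Pi.single_eq_same]
        exact hdiag c
      · simp only [Pi.single_eq_of_ne hc, Finset.sum_const_zero]
    simp_rw [hblock]
    exact Finset.univ_sum_single (1 : ∀ i, Matrix (Fin (n i)) (Fin (n i)) F)
  have heS_left : ∀ s : S, eS * s = s := fun s => hf.1 (by rw [map_mul, hfeS, one_mul])
  have heS_right : ∀ s : S, s * eS = s := fun s => hf.1 (by rw [map_mul, hfeS, mul_one])
  set ea : A := ((eS : S) : A) with hea
  have hea_left : ∀ s : S, ea * (s : A) = (s : A) := fun s =>
    congrArg Subtype.val (heS_left s)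
  have hea_right : ∀ s : S, (s : A) * ea = (s : A) := fun s =>
    congrArg Subtype.val (heS_right s)
  have hea_sum : ea = ∑ b, ∑ i, N b i i := by
    rw [hea, heS]
    rw [AddSubmonoidClass.coe_finset_sum]
    exact Finset.sum_congr rfl fun b _ => AddSubmonoidClass.coe_finset_sum _ _
  -- membership of the generators in Tgt
  have hTl : ∀ a : A, ea * a ∈ Tgt F A := by
    intro a
    rw [hea_sum, Finset.sum_mul]
    refine Submodule.sum_mem _ fun b _ => ?_
    rw [Finset.sum_mul]
    exact Submodule.sum_mem _ fun i _ => hNl b i a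
  have hTr : ∀ a : A, a * ea ∈ Tgt F A := by
    intro a
    rw [hea_sum, Finset.mul_sum]
    refine Submodule.sum_mem _ fun b _ => ?_
    rw [Finset.mul_sum]
    exact Submodule.sum_mem _ fun i _ => hNr b i a
  have hTm : ∀ a c : A, a * ea * c ∈ Tgt F A := by
    intro a c
    rw [hea_sum, Finset.mul_sum, Finset.sum_mul]
    refine Submodule.sum_mem _ fun b _ => ?_
    rw [Finset.mul_sum, Finset.sum_mul]
    exact Submodule.sum_mem _ fun i _ => hNm b i a c
  -- the ideal generated by S
  set G : Set A := ((S : Set A) ∪ {z | ∃ a : A, z = ea * a} ∪ {z | ∃ a : A, z = a * ea}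
    ∪ {z | ∃ a c : A, z = a * ea * c}) with hG
  set K : Submodule F A := Submodule.span F G with hK
  have hmem1 : ∀ x ∈ (S : Set A), x ∈ G := fun x hx =>
    Or.inl (Or.inl (Or.inl hx))
  have hmem2 : ∀ a : A, ea * a ∈ G := fun a => Or.inl (Or.inl (Or.inr ⟨a, rfl⟩))
  have hmem3 : ∀ a : A, a * ea ∈ G := fun a => Or.inl (Or.inr ⟨a, rfl⟩)
  have hmem4 : ∀ a c : A, a * ea * c ∈ G := fun a c => Or.inr ⟨a, c, rfl⟩
  have hKideal : ∀ c : A, ∀ x ∈ K, c * x ∈ K ∧ x * c ∈ K := by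
    intro c x hx
    refine Submodule.span_induction (p := fun x _ => c * x ∈ K ∧ x * c ∈ K) ?_ ?_ ?_ ?_ hx
    · intro z hz
      rcases hz with ((hz | ⟨a, rfl⟩) | ⟨a, rfl⟩) | ⟨a, d, rfl⟩
      · -- z ∈ S
        obtain ⟨s, rfl⟩ : ∃ s : S, (s : A) = z := ⟨⟨z, hz⟩, rfl⟩
        constructor
        · have : c * (s : A) = c * ea * (s : A) := by rw [mul_assoc, hea_left s]
          rw [this]
          exact Submodule.subset_span (hmem4 c (s : A))
        · have : (s : A) * c = (s : A) * ea * c := by rw [hea_right s]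
          rw [this]
          exact Submodule.subset_span (hmem4 (s : A) c)
      · constructor
        · have : c * (ea * a) = c * ea * a := by rw [mul_assoc]
          rw [this]
          exact Submodule.subset_span (hmem4 c a)
        · have : (ea * a) * c = ea * (a * c) := by rw [mul_assoc]
          rw [this]
          exact Submodule.subset_span (hmem2 (a * c))
      · constructor
        · have : c * (a * ea) = (c * a) * ea := by rw [mul_assoc]
          rw [this]
          exact Submodule.subset_span (hmem3 (c * a))
        · exact Submodule.subset_span (hmem4 a c)
      · constructor
        · have : c * (a * ea * d) = (c * a) * ea * d := by
            rw [← mul_assoc, ← mul_assoc]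
          rw [this]
          exact Submodule.subset_span (hmem4 (c * a) d)
        · have : (a * ea * d) * c = a * ea * (d * c) := by rw [mul_assoc]
          rw [this]
          exact Submodule.subset_span (hmem4 a (d * c))
    · simp
    · intro x y _ _ hx hy
      exact ⟨by rw [mul_add]; exact add_mem hx.1 hy.1,
        by rw [add_mul]; exact add_mem hx.2 hy.2⟩
    · intro r x _ hx
      exact ⟨by rw [mul_smul_comm]; exact Submodule.smul_mem _ _ hx.1,
        by rw [smul_mul_assoc]; exact Submodule.smul_mem _ _ hx.2⟩
  have hKtop : K = ⊤ := hgen K hKideal fun x hx => Submodule.subset_span (hmem1 x hx)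
  have hKle : K ≤ Tgt F A := by
    rw [hK]
    refine Submodule.span_le.mpr ?_
    rintro z (((hz | ⟨a, rfl⟩) | ⟨a, rfl⟩) | ⟨a, c, rfl⟩)
    · have hz' : ea * z = z := hea_left ⟨z, hz⟩
      rw [← hz']
      exact hTl z
    · exact hTl a
    · exact hTr a
    · exact hTm a c
  show Tgt F A = ⊤
  exact top_le_iff.mp (hKtop ▸ hKle)
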